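/- Let λ₁, λ₂, λ₃ ∈ ℝ satisfy λ₁ + λ₃ + λ₁λ₂ = 0. Set B = λ₂ + iλ₃, α = (i − λ₁)/(1 + λ₁²), and β = λ₂ − λ₁λ₃ − 1. Then for all z, w ∈ ℂ the following polynomial identity holds: [(1 + iλ₁)(λ₁ + i − z + Bw) + (1 − iλ₁)(λ₁ − i − w + B̄z)]·(αz + ᾱw + 1) + β·[αz(λ₁ + i − z + Bw) + ᾱw(λ₁ − i − w + B̄z)] = 0, where B̄ and ᾱ are the complex conjugates of B and α. Equivalently, the (multivalued) function H = z^{1+iλ₁} w^{1−iλ₁} (αz + ᾱw + 1)^{β} has logarithmic derivative zero along the vector field ż = (λ₁ + i)z − z² + Bzw, ẇ = (λ₁ − i)w − w² + B̄zw; hence when w = z̄ this gives a first integral of ż = (λ₁ + i)z − z² + Bzz̄, so this system has a center near z = i whenever λ₁ + λ₃ + λ₁λ₂ = 0. -/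

import Mathlib

open Complex

/-- Along the Lotka–Volterra branch `λ₁ + λ₃ + λ₁λ₂ = 0`, with
`B = λ₂ + iλ₃`, `α = (i − λ₁)/(1 + λ₁²)`, `β = λ₂ − λ₁λ₃ − 1`, the polynomial
identity expressing that `H = z^{1+iλ₁} w^{1−iλ₁} (αz + ᾱw + 1)^β` has zero
logarithmic derivative along `ż = (λ₁+i)z − z² + Bzw`, `ẇ = (λ₁−i)w − w² + B̄zw`
holds; hence the perturbed system has a center near `z = i`. -/
theorem lotka_volterra_branch_first_integral (l1 l2 l3 : ℝ)
    (hL : l1 + l3 + l1 * l2 = 0) (z w : ℂ) :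
    ((1 + I * (l1 : ℂ)) * ((l1 : ℂ) + I - z + ((l2 : ℂ) + I * (l3 : ℂ)) * w)
        + (1 - I * (l1 : ℂ)) * ((l1 : ℂ) - I - w
            + (starRingEnd ℂ) ((l2 : ℂ) + I * (l3 : ℂ)) * z))
      * (((I - (l1 : ℂ)) / (1 + (l1 : ℂ) ^ 2)) * z
          + (starRingEnd ℂ) ((I - (l1 : ℂ)) / (1 + (l1 : ℂ) ^ 2)) * w + 1)
    + ((l2 : ℂ) - (l1 : ℂ) * (l3 : ℂ) - 1)
      * (((I - (l1 : ℂ)) / (1 + (l1 : ℂ) ^ 2)) * z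
            * ((l1 : ℂ) + I - z + ((l2 : ℂ) + I * (l3 : ℂ)) * w)
        + (starRingEnd ℂ) ((I - (l1 : ℂ)) / (1 + (l1 : ℂ) ^ 2)) * w
            * ((l1 : ℂ) - I - w + (starRingEnd ℂ) ((l2 : ℂ) + I * (l3 : ℂ)) * z)) = 0 := by
  have hl3 : (l3 : ℂ) = -(l1 : ℂ) - (l1 : ℂ) * (l2 : ℂ) := by
    have : l3 = -l1 - l1 * l2 := by linarith
    push_cast [this]; ring
  have hne : (1 : ℂ) + (l1 : ℂ) ^ 2 ≠ 0 := by
    intro h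
    have h2 : (1 : ℝ) + l1 ^ 2 = 0 := by exact_mod_cast h
    nlinarith [sq_nonneg l1]
  simp only [map_div₀, map_add, map_sub, map_mul, map_one, map_pow, map_neg, Complex.conj_I,
    Complex.conj_ofReal, hl3]
  field_simp
  have h3 : (I : ℂ) ^ 3 = -I := by rw [pow_succ, Complex.I_sq]; ring
  ring_nf
  rw [h3, Complex.I_sq]
  ring
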